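/- Let G be a group, A = ⊕_{g∈G} A_g a G-graded unital *-algebra over ℂ whose unit fibre A_e is commutative, and χ a positive character of A_e. Then for every g ∈ G and all a, b ∈ A_g with χ(a* a) ≠ 0 and χ(b* b) ≠ 0, one has χ(a* a)·χ(b* b) = χ(a* b)·χ(b* a) = |χ(a* b)|², and in particular χ(a* b) ≠ 0. -/

import Mathlib

/-- A `G`-graded unital `⋆`-algebra over `ℂ`: a direct sum decomposition
`A = ⊕_{g ∈ G} A_g` into subspaces with `A_g · A_h ⊆ A_{gh}`, `(A_g)* = A_{g⁻¹}` and
`1 ∈ A_e`. -/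
structure GradedStarAlgebra (G : Type*) [Group G]
    (A : Type*) [Ring A] [Algebra ℂ A] [StarRing A] [StarModule ℂ A] where
  fiber : G → Submodule ℂ A
  mul_mem' : ∀ {g h : G} {a b : A}, a ∈ fiber g → b ∈ fiber h → a * b ∈ fiber (g * h)
  star_mem' : ∀ {g : G} {a : A}, a ∈ fiber g → star a ∈ fiber g⁻¹
  one_mem' : (1 : A) ∈ fiber 1
  decompose' : ∀ a : A, ∃ (F : Finset G) (c : G → A),
    (∀ g : G, c g ∈ fiber g) ∧ a = ∑ g ∈ F, c g
  independent' : ∀ (F : Finset G) (c : G → A), (∀ g : G, c g ∈ fiber g) →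
    ∑ g ∈ F, c g = 0 → ∀ g ∈ F, c g = 0

variable {G : Type*} [Group G]
variable {A : Type*} [Ring A] [Algebra ℂ A] [StarRing A] [StarModule ℂ A]

/-- A positive character of the unit fibre `A_e` of a `G`-graded unital `⋆`-algebra: a unital,
multiplicative, `ℂ`-linear, `⋆`-preserving functional on `A_e` such that `χ (a* a) ≥ 0` for
every `a ∈ A_g` and every `g ∈ G`. -/
structure PosChar (S : GradedStarAlgebra G A) where
  toFun : A → ℂ
  map_one' : toFun 1 = 1
  map_mul' : ∀ x ∈ S.fiber 1, ∀ y ∈ S.fiber 1, toFun (x * y) = toFun x * toFun y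
  map_add' : ∀ x ∈ S.fiber 1, ∀ y ∈ S.fiber 1, toFun (x + y) = toFun x + toFun y
  map_smul' : ∀ (c : ℂ), ∀ x ∈ S.fiber 1, toFun (c • x) = c * toFun x
  map_star' : ∀ x ∈ S.fiber 1, toFun (star x) = starRingEnd ℂ (toFun x)
  pos' : ∀ (g : G), ∀ a ∈ S.fiber g,
    0 ≤ (toFun (star a * a)).re ∧ (toFun (star a * a)).im = 0

section Aux

/-- `star u * v` lands in the unit fibre when `u, v` are in the same fibre. -/
lemma GSA.mem_one_left {S : GradedStarAlgebra G A} {g : G} {u v : A}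
    (hu : u ∈ S.fiber g) (hv : v ∈ S.fiber g) : star u * v ∈ S.fiber 1 := by
  simpa using S.mul_mem' (S.star_mem' hu) hv

/-- `u * star v` lands in the unit fibre when `u, v` are in the same fibre. -/
lemma GSA.mem_one_right {S : GradedStarAlgebra G A} {g : G} {u v : A}
    (hu : u ∈ S.fiber g) (hv : v ∈ S.fiber g) : u * star v ∈ S.fiber 1 := by
  simpa using S.mul_mem' hu (S.star_mem' hv)

/-- `χ (v* u)` is the conjugate of `χ (u* v)`. -/
lemma GSA.conj_rel {S : GradedStarAlgebra G A} (χ : PosChar S) {g : G} {u v : A}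
    (hu : u ∈ S.fiber g) (hv : v ∈ S.fiber g) :
    χ.toFun (star v * u) = starRingEnd ℂ (χ.toFun (star u * v)) := by
  have h := χ.map_star' _ (GSA.mem_one_left hu hv)
  rw [star_mul, star_star] at h
  exact h

/-- The key algebraic identity:
`χ(u* v) χ(v* u) χ(u* v) = χ(u* u) χ(u* v) χ(v* v)` for `u, v ∈ A_g`.
It comes from commuting `v v*` and `u u*` inside `u* (v v*) (u u*) v`. -/
lemma GSA.key {S : GradedStarAlgebra G A}
    (hcomm : ∀ x ∈ S.fiber 1, ∀ y ∈ S.fiber 1, x * y = y * x)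
    (χ : PosChar S) {g : G} {u v : A} (hu : u ∈ S.fiber g) (hv : v ∈ S.fiber g) :
    χ.toFun (star u * v) * χ.toFun (star v * u) * χ.toFun (star u * v) =
      χ.toFun (star u * u) * χ.toFun (star u * v) * χ.toFun (star v * v) := by
  have m_uv := GSA.mem_one_left hu hv
  have m_vu := GSA.mem_one_left hv hu
  have m_uu := GSA.mem_one_left hu hu
  have m_vv := GSA.mem_one_left hv hv
  have m1 : (star v * u) * (star u * v) ∈ S.fiber 1 := by
    simpa using S.mul_mem' m_vu m_uv
  have m2 : (star u * v) * (star v * v) ∈ S.fiber 1 := by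
    simpa using S.mul_mem' m_uv m_vv
  have hc : (v * star v) * (u * star u) = (u * star u) * (v * star v) :=
    hcomm _ (GSA.mem_one_right hv hv) _ (GSA.mem_one_right hu hu)
  have helt : (star u * v) * ((star v * u) * (star u * v)) =
      (star u * u) * ((star u * v) * (star v * v)) := by
    have hc' := congrArg (fun x => star u * (x * v)) hc
    simp only [mul_assoc] at hc' ⊢
    exact hc'
  calc χ.toFun (star u * v) * χ.toFun (star v * u) * χ.toFun (star u * v)
      = χ.toFun (star u * v) * (χ.toFun (star v * u) * χ.toFun (star u * v)) :=
        mul_assoc _ _ _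
    _ = χ.toFun (star u * v) * χ.toFun ((star v * u) * (star u * v)) := by
        rw [χ.map_mul' _ m_vu _ m_uv]
    _ = χ.toFun ((star u * v) * ((star v * u) * (star u * v))) :=
        (χ.map_mul' _ m_uv _ m1).symm
    _ = χ.toFun ((star u * u) * ((star u * v) * (star v * v))) := by rw [helt]
    _ = χ.toFun (star u * u) * χ.toFun ((star u * v) * (star v * v)) :=
        χ.map_mul' _ m_uu _ m2
    _ = χ.toFun (star u * u) * (χ.toFun (star u * v) * χ.toFun (star v * v)) := by
        rw [χ.map_mul' _ m_uv _ m_vv]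
    _ = χ.toFun (star u * u) * χ.toFun (star u * v) * χ.toFun (star v * v) :=
        (mul_assoc _ _ _).symm

end Aux

/-- If `A` is a `G`-graded unital `⋆`-algebra with commutative unit fibre `A_e` and `χ` is a
positive character of `A_e`, then for `a, b ∈ A_g` with `χ (a* a) ≠ 0 ≠ χ (b* b)` one has
`χ(a* a) χ(b* b) = χ(a* b) χ(b* a) = |χ(a* b)|²`, and in particular `χ(a* b) ≠ 0`. -/
theorem posChar_gram_identity (S : GradedStarAlgebra G A)
    (hcomm : ∀ x ∈ S.fiber 1, ∀ y ∈ S.fiber 1, x * y = y * x)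
    (χ : PosChar S) (g : G) (a b : A) (ha : a ∈ S.fiber g) (hb : b ∈ S.fiber g)
    (ha0 : χ.toFun (star a * a) ≠ 0) (hb0 : χ.toFun (star b * b) ≠ 0) :
    χ.toFun (star a * a) * χ.toFun (star b * b) =
      χ.toFun (star a * b) * χ.toFun (star b * a) ∧
    χ.toFun (star a * b) * χ.toFun (star b * a) =
      ((‖χ.toFun (star a * b)‖ : ℝ) : ℂ) ^ 2 ∧
    χ.toFun (star a * b) ≠ 0 := by
  set α := χ.toFun (star a * a) with hα
  set β := χ.toFun (star b * b) with hβ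
  set p := χ.toFun (star a * b) with hp
  have hq : χ.toFun (star b * a) = starRingEnd ℂ p := GSA.conj_rel χ ha hb
  -- first, `p ≠ 0`
  have hp0 : p ≠ 0 := by
    intro hp0
    -- apply the key identity to `u = a`, `v = a + b`
    have hab : a + b ∈ S.fiber g := add_mem ha hb
    have key := GSA.key hcomm χ ha hab
    have hq0 : χ.toFun (star b * a) = 0 := by rw [hq, hp0, map_zero]
    have e1 : χ.toFun (star a * (a + b)) = α := by
      rw [mul_add, χ.map_add' _ (GSA.mem_one_left ha ha) _ (GSA.mem_one_left ha hb),
        ← hα, ← hp, hp0, add_zero]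
    have e2 : χ.toFun (star (a + b) * a) = α := by
      rw [star_add, add_mul, χ.map_add' _ (GSA.mem_one_left ha ha) _ (GSA.mem_one_left hb ha),
        ← hα, hq0, add_zero]
    have e3 : χ.toFun (star (a + b) * (a + b)) = α + β := by
      rw [star_add, add_mul, mul_add, mul_add]
      have m1 := GSA.mem_one_left ha ha
      have m2 := GSA.mem_one_left ha hb
      have m3 := GSA.mem_one_left hb ha
      have m4 := GSA.mem_one_left hb hb
      rw [χ.map_add' _ (add_mem m1 m2) _ (add_mem m3 m4),
        χ.map_add' _ m1 _ m2, χ.map_add' _ m3 _ m4, ← hα, ← hβ, ← hp, hp0, hq0]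
      ring
    rw [e1, e2, e3, ← hα] at key
    -- key : α * α * α = α * α * (α + β)
    have : α * α * β = 0 := by linear_combination -key
    exact hb0 ((mul_eq_zero.mp this).resolve_left (mul_ne_zero ha0 ha0))
  have key := GSA.key hcomm χ ha hb
  rw [← hα, ← hβ, ← hp, hq] at key
  -- key : p * conj p * p = α * p * β
  have habs : p * starRingEnd ℂ p = ((‖p‖ : ℝ) : ℂ) ^ 2 := by
    rw [Complex.mul_conj]
    norm_cast
    rw [Complex.sq_norm]
  refine ⟨?_, by rw [hq, habs], hp0⟩
  rw [hq]
  have := mul_right_cancel₀ hp0 (by linear_combination key :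
    (p * starRingEnd ℂ p) * p = (α * β) * p)
  linear_combination -this
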